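/- As T → ∞, the time average (1/T)·∫₀ᵀ M(t) dt of the mixing matrices M(t) = U(t) ∘ conj(U(t)) converges (entrywise) to the average mixing matrix Σ_{r=1}^d E_r ∘ E_r, where ∘ denotes the Schur (entrywise) product. -/

import Mathlib

open Matrix BigOperators MeasureTheory Filter Topology

set_option maxHeartbeats 1000000 in
lemma exp_smul_idem {𝔸 : Type*} [NormedRing 𝔸] [NormedAlgebra ℂ 𝔸] [CompleteSpace 𝔸]
    (c : ℂ) (p : 𝔸) (hp : p * p = p) :
    NormedSpace.exp (c • p) = 1 + (Complex.exp c - 1) • p := by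
  have hpow : ∀ k : ℕ, p ^ (k + 1) = p := by
    intro k
    induction k with
    | zero => simp
    | succ k ih => rw [pow_succ, ih, hp]
  have hsum : Summable fun k : ℕ => ((Nat.factorial k : ℂ)⁻¹) • (c • p) ^ k :=
    NormedSpace.expSeries_summable' (𝕂 := ℂ) (c • p)
  have hsumc : Summable fun k : ℕ => ((Nat.factorial k : ℂ)⁻¹) • c ^ k :=
    NormedSpace.expSeries_summable' (𝕂 := ℂ) c
  have hsumc' : Summable fun k : ℕ => ((Nat.factorial (k+1) : ℂ)⁻¹) • c ^ (k + 1) :=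
    (summable_nat_add_iff 1).2 hsumc
  have hexpc : Complex.exp c = 1 + ∑' k : ℕ, ((Nat.factorial (k+1) : ℂ)⁻¹) • c ^ (k + 1) := by
    rw [Complex.exp_eq_exp_ℂ, NormedSpace.exp_eq_tsum ℂ]
    beta_reduce
    rw [Summable.tsum_eq_zero_add hsumc]
    simp [smul_eq_mul]
  rw [NormedSpace.exp_eq_tsum ℂ]
  beta_reduce
  rw [Summable.tsum_eq_zero_add hsum]
  congr 1
  · simp
  · have : ∀ k : ℕ, ((Nat.factorial (k+1) : ℂ)⁻¹) • (c • p) ^ (k + 1)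
        = (((Nat.factorial (k+1) : ℂ)⁻¹) • c ^ (k + 1)) • p := by
      intro k
      rw [smul_pow, hpow, smul_smul, smul_eq_mul]
    simp_rw [this]
    rw [Summable.tsum_smul_const hsumc', hexpc, add_sub_cancel_left]

set_option maxHeartbeats 1000000 in
lemma exp_sum_smul_idem {n d : ℕ} (c : Fin d → ℂ) (P : Fin d → Matrix (Fin n) (Fin n) ℂ)
    (hidem : ∀ r, P r * P r = P r) (horth : ∀ r s, r ≠ s → P r * P s = 0) :
    NormedSpace.exp (∑ r, c r • P r) = 1 + ∑ r, (Complex.exp (c r) - 1) • P r := by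
  letI : SeminormedRing (Matrix (Fin n) (Fin n) ℂ) := Matrix.linftyOpSemiNormedRing
  letI : NormedRing (Matrix (Fin n) (Fin n) ℂ) := Matrix.linftyOpNormedRing
  letI : NormedAlgebra ℂ (Matrix (Fin n) (Fin n) ℂ) := Matrix.linftyOpNormedAlgebra
  have key : ∀ s : Finset (Fin d), NormedSpace.exp (∑ r ∈ s, c r • P r)
      = 1 + ∑ r ∈ s, (Complex.exp (c r) - 1) • P r := by
    intro s
    induction s using Finset.induction with
    | empty => simp [NormedSpace.exp_zero]
    | @insert a s ha ih =>
      rw [Finset.sum_insert ha, Finset.sum_insert ha]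
      have hcomm : Commute (c a • P a) (∑ r ∈ s, c r • P r) := by
        apply Commute.sum_right
        intro r hr
        have hra : a ≠ r := fun h => ha (h ▸ hr)
        unfold Commute SemiconjBy
        rw [smul_mul_smul_comm, smul_mul_smul_comm, horth a r hra, horth r a hra.symm,
          smul_zero, smul_zero]
      rw [Matrix.exp_add_of_commute _ _ hcomm, ih]; erw [exp_smul_idem (c a) (P a) (hidem a)]
      have hcross : P a * (∑ r ∈ s, (Complex.exp (c r) - 1) • P r) = 0 := by
        rw [Finset.mul_sum]
        apply Finset.sum_eq_zero
        intro r hr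
        have hra : a ≠ r := fun h => ha (h ▸ hr)
        rw [mul_smul_comm, horth a r hra, smul_zero]
      simp only [mul_add, add_mul, mul_one, one_mul, smul_mul_assoc, hcross, smul_zero,
        add_zero]
      abel
  exact key Finset.univ

/-- The time average `(1/T) ∫₀ᵀ M(t) dt` of the mixing matrices
`M(t) = U(t) ∘ conj(U(t))`, where `U(t) = exp(itA)`, converges entrywise to the average
mixing matrix `∑ r, E r ∘ E r` as `T → ∞`. -/
theorem average_mixing_tendsto (n d : ℕ) (hn : 1 ≤ n)
    (A : Matrix (Fin n) (Fin n) ℝ) (hA : Aᵀ = A)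
    (θ : Fin d → ℝ) (hθ : Function.Injective θ)
    (E : Fin d → Matrix (Fin n) (Fin n) ℝ)
    (hEsymm : ∀ r, (E r)ᵀ = E r)
    (hEidem : ∀ r, E r * E r = E r)
    (hEorth : ∀ r s, r ≠ s → E r * E s = 0)
    (hEsum : ∑ r, E r = 1)
    (hdecomp : A = ∑ r, θ r • E r)
    (a b : Fin n) :
    Tendsto
      (fun T : ℝ => (1 / (T : ℂ)) *
        ∫ t in (0 : ℝ)..T,
          ((NormedSpace.exp ((Complex.I * (t : ℂ)) • A.map (Complex.ofReal))) ⊙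
            ((NormedSpace.exp ((Complex.I * (t : ℂ)) • A.map (Complex.ofReal))).map
              (starRingEnd ℂ))) a b)
      atTop
      (𝓝 ((∑ r, (E r).map (Complex.ofReal) ⊙ (E r).map (Complex.ofReal)) a b)) := by
  classical
  set P : Fin d → Matrix (Fin n) (Fin n) ℂ := fun r => (E r).map Complex.ofReal with hPdef
  have hP_idem : ∀ r, P r * P r = P r := by
    intro r
    ext i j
    have := congrFun (congrFun (hEidem r) i) j
    simp only [hPdef, Matrix.mul_apply, Matrix.map_apply] at this ⊢
    push_cast
    exact_mod_cast congrArg Complex.ofReal this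
  have hP_orth : ∀ r s, r ≠ s → P r * P s = 0 := by
    intro r s hrs
    ext i j
    have := congrFun (congrFun (hEorth r s hrs) i) j
    simp only [Matrix.mul_apply, Matrix.zero_apply] at this ⊢
    simp only [hPdef, Matrix.map_apply]
    push_cast
    exact_mod_cast congrArg Complex.ofReal this
  have hP_sum : ∑ r, P r = 1 := by
    ext i j
    have := congrFun (congrFun hEsum i) j
    simp only [Matrix.sum_apply, Matrix.one_apply] at this ⊢
    simp only [hPdef, Matrix.map_apply]
    rw [← Complex.ofReal_sum, this]
    split <;> simp
  have hdecomp' : A.map Complex.ofReal = ∑ r, (θ r : ℂ) • P r := by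
    ext i j
    have := congrFun (congrFun (congrArg (fun M => M) hdecomp) i) j
    simp only [Matrix.sum_apply, Matrix.smul_apply, smul_eq_mul] at this
    simp only [Matrix.map_apply, Matrix.sum_apply, Matrix.smul_apply, smul_eq_mul, hPdef,
      Matrix.map_apply, this]
    push_cast
    rfl
  have hexp : ∀ t : ℝ, NormedSpace.exp ((Complex.I * (t : ℂ)) • A.map Complex.ofReal)
      = ∑ r, Complex.exp (Complex.I * t * θ r) • P r := by
    intro t
    have h1 : (Complex.I * (t : ℂ)) • A.map Complex.ofReal
        = ∑ r, (Complex.I * t * θ r) • P r := by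
      rw [hdecomp', Finset.smul_sum]
      refine Finset.sum_congr rfl fun r _ => ?_
      rw [smul_smul]
    rw [h1, exp_sum_smul_idem _ _ hP_idem hP_orth, ← hP_sum, ← Finset.sum_add_distrib]
    refine Finset.sum_congr rfl fun r _ => ?_
    rw [sub_smul, one_smul]
    abel
  set c : Fin d × Fin d → ℂ := fun p => Complex.I * ((θ p.1 : ℂ) - (θ p.2 : ℂ)) with hcdef
  set e : Fin d → ℂ := fun r => ((E r a b : ℝ) : ℂ) with hedef
  have hM : ∀ t : ℝ,
      ((NormedSpace.exp ((Complex.I * (t : ℂ)) • A.map (Complex.ofReal))) ⊙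
        ((NormedSpace.exp ((Complex.I * (t : ℂ)) • A.map (Complex.ofReal))).map
          (starRingEnd ℂ))) a b
      = ∑ p : Fin d × Fin d, (e p.1 * e p.2) * Complex.exp (c p * t) := by
    intro t
    rw [Matrix.hadamard_apply, Matrix.map_apply, hexp t]
    have hUab : (∑ r, Complex.exp (Complex.I * t * θ r) • P r) a b
        = ∑ r, Complex.exp (Complex.I * t * θ r) * e r := by
      simp [Matrix.sum_apply, hPdef, Matrix.map_apply, hedef]
    rw [hUab]
    rw [map_sum]
    have hconj : ∀ s : Fin d, (starRingEnd ℂ) (Complex.exp (Complex.I * t * θ s) * e s)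
        = Complex.exp (-(Complex.I * t * θ s)) * e s := by
      intro s
      rw [_root_.map_mul, ← Complex.exp_conj]
      simp [hedef, Complex.conj_ofReal]
    simp_rw [hconj]
    rw [Finset.sum_mul_sum, Fintype.sum_prod_type]
    refine Finset.sum_congr rfl fun r _ => Finset.sum_congr rfl fun q _ => ?_
    rw [show c (r, q) * t = Complex.I * t * θ r + -(Complex.I * t * θ q) by
      rw [hcdef]; ring]
    rw [Complex.exp_add]
    ring
  have hcont : ∀ p : Fin d × Fin d, Continuous fun t : ℝ => Complex.exp (c p * t) :=
    fun p => Complex.continuous_exp.comp (continuous_const.mul Complex.continuous_ofReal)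
  have hint : ∀ T : ℝ,
      (∫ t in (0 : ℝ)..T,
        ((NormedSpace.exp ((Complex.I * (t : ℂ)) • A.map (Complex.ofReal))) ⊙
          ((NormedSpace.exp ((Complex.I * (t : ℂ)) • A.map (Complex.ofReal))).map
            (starRingEnd ℂ))) a b)
      = ∑ p : Fin d × Fin d, (e p.1 * e p.2) * ∫ t in (0 : ℝ)..T, Complex.exp (c p * t) := by
    intro T
    rw [intervalIntegral.integral_congr (fun t _ => hM t)]
    rw [intervalIntegral.integral_finset_sum (f := fun p (t : ℝ) => e p.1 * e p.2 * Complex.exp (c p * t))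
      (fun p _ => ((continuous_const.mul (hcont p)).intervalIntegrable _ _))]
    exact Finset.sum_congr rfl fun p _ => intervalIntegral.integral_const_mul _ _
  have hlim : ∀ p : Fin d × Fin d,
      Tendsto (fun T : ℝ => (1 / (T : ℂ)) * ∫ t in (0 : ℝ)..T, Complex.exp (c p * t))
        atTop (𝓝 (if p.1 = p.2 then 1 else 0)) := by
    intro p
    by_cases hp : p.1 = p.2
    · have hc0 : c p = 0 := by rw [hcdef]; simp [hp]
      rw [if_pos hp]
      refine Tendsto.congr' ?_ (tendsto_const_nhds (x := (1:ℂ)) (f := atTop))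
      filter_upwards [eventually_ge_atTop (1 : ℝ)] with T hT
      have hT0 : T ≠ 0 := by positivity
      rw [hc0]
      simp only [zero_mul, Complex.exp_zero]
      rw [intervalIntegral.integral_const]
      simp only [sub_zero, Complex.real_smul, mul_one]
      rw [one_div, inv_mul_cancel₀ (by exact_mod_cast hT0)]
    · have hθne : (θ p.1 : ℂ) - (θ p.2 : ℂ) ≠ 0 := by
        rw [sub_ne_zero]
        exact_mod_cast fun h => hp (hθ h)
      have hc : c p ≠ 0 := by rw [hcdef]; exact mul_ne_zero Complex.I_ne_zero hθne
      rw [if_neg hp]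
      apply squeeze_zero_norm' (a := fun T : ℝ => (2 / ‖c p‖) * (1 / T))
      · filter_upwards [eventually_ge_atTop (1 : ℝ)] with T hT
        have hT0 : (0 : ℝ) < T := lt_of_lt_of_le one_pos hT
        rw [integral_exp_mul_complex hc, Complex.ofReal_zero, mul_zero, Complex.exp_zero]
        have hre : (c p * (T : ℂ)).re = 0 := by
          rw [hcdef]
          simp [Complex.mul_re, Complex.mul_im]
        have hnorm : ‖Complex.exp (c p * T) - 1‖ ≤ 2 := by
          calc ‖Complex.exp (c p * T) - 1‖ ≤ ‖Complex.exp (c p * T)‖ + ‖(1 : ℂ)‖ :=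
                norm_sub_le _ _
            _ = Real.exp ((c p * T).re) + 1 := by
                rw [Complex.norm_exp, norm_one]
            _ = 2 := by rw [hre, Real.exp_zero]; norm_num
        have hTn : ‖(T : ℂ)‖ = T := by
          rw [Complex.norm_real, Real.norm_eq_abs, abs_of_pos hT0]
        rw [norm_mul, norm_div, norm_div, norm_one, hTn, mul_comm]
        gcongr
      · have := tendsto_inv_atTop_zero.const_mul (2 / ‖c p‖)
        simpa [one_div] using this
  have hfinal : Tendsto
      (fun T : ℝ => ∑ p : Fin d × Fin d,
        (e p.1 * e p.2) * ((1 / (T : ℂ)) * ∫ t in (0 : ℝ)..T, Complex.exp (c p * t)))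
      atTop
      (𝓝 (∑ p : Fin d × Fin d, (e p.1 * e p.2) * (if p.1 = p.2 then 1 else 0))) :=
    tendsto_finset_sum _ fun p _ => (hlim p).const_mul _
  have hval : ((∑ r, (E r).map (Complex.ofReal) ⊙ (E r).map (Complex.ofReal)) a b)
      = ∑ p : Fin d × Fin d, (e p.1 * e p.2) * (if p.1 = p.2 then 1 else 0) := by
    rw [Fintype.sum_prod_type]
    simp [Matrix.sum_apply, Matrix.hadamard_apply, Matrix.map_apply, hedef, mul_ite,
      mul_one, mul_zero, Finset.sum_ite_eq]
  rw [hval]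
  refine hfinal.congr fun T => ?_
  rw [hint T, Finset.mul_sum]
  exact Finset.sum_congr rfl fun p _ => by ring
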